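/- Let G be a connected simple graph and k a positive integer. Suppose the tree-length of G is at most k, i.e., there exists a chordal graph H on the same vertex set with E(G) ⊆ E(H) such that d_G(u,v) ≤ k for every edge {u,v} of H. Then G is k-hyperbolic: for all vertices x, y, u, v, d_G(x,y) + d_G(u,v) ≤ max(d_G(x,u) + d_G(y,v), d_G(x,v) + d_G(y,u)) + 2k. -/

import Mathlib

/-- A graph is chordal if it has no induced cycle of length `4` or more. -/
def IsChordalGraph {V : Type*} (H : SimpleGraph V) : Prop :=
  ∀ n : ℕ, 4 ≤ n → IsEmpty (SimpleGraph.cycleGraph n ↪g H)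

namespace HypAux

open SimpleGraph List

variable {V : Type*} {H : SimpleGraph V}

/-- Reachability within a vertex set. -/
def ReachIn (H : SimpleGraph V) (F : Set V) (a b : V) : Prop :=
  ∃ w : H.Walk a b, ∀ x ∈ w.support, x ∈ F

lemma ReachIn.mem_left {F : Set V} {a b : V} (h : ReachIn H F a b) : a ∈ F := by
  obtain ⟨w, hw⟩ := h; exact hw a w.start_mem_support

lemma ReachIn.mem_right {F : Set V} {a b : V} (h : ReachIn H F a b) : b ∈ F := by
  obtain ⟨w, hw⟩ := h; exact hw b w.end_mem_support

lemma ReachIn.refl {F : Set V} {a : V} (ha : a ∈ F) : ReachIn H F a a :=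
  ⟨SimpleGraph.Walk.nil, by simpa using ha⟩

lemma ReachIn.symm {F : Set V} {a b : V} (h : ReachIn H F a b) : ReachIn H F b a := by
  obtain ⟨w, hw⟩ := h
  exact ⟨w.reverse, by simpa using hw⟩

lemma ReachIn.trans {F : Set V} {a b c : V} (h : ReachIn H F a b) (h' : ReachIn H F b c) :
    ReachIn H F a c := by
  obtain ⟨w, hw⟩ := h; obtain ⟨w', hw'⟩ := h'
  refine ⟨w.append w', ?_⟩
  intro x hx
  rcases (SimpleGraph.Walk.mem_support_append_iff _ _).mp hx with h | h
  · exact hw x h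
  · exact hw' x h

lemma ReachIn.adj_right {F : Set V} {a b c : V} (h : ReachIn H F a b) (hbc : H.Adj b c)
    (hc : c ∈ F) : ReachIn H F a c := by
  obtain ⟨w, hw⟩ := h
  refine ⟨w.concat hbc, ?_⟩
  intro x hx
  rw [SimpleGraph.Walk.support_concat, List.mem_append] at hx
  rcases hx with h1 | h1
  · exact hw x h1
  · simp only [List.mem_singleton] at h1; subst h1; exact hc

lemma ReachIn.mono {F F' : Set V} {a b : V} (hFF : F ⊆ F') (h : ReachIn H F a b) :
    ReachIn H F' a b := by
  obtain ⟨w, hw⟩ := h; exact ⟨w, fun x hx => hFF (hw x hx)⟩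

/-- Build a walk from a list which is a chain of adjacent vertices. -/
lemma walk_of_list :
    ∀ (l : List V) (a b : V), l.Chain' H.Adj → l.head? = some a → l.getLast? = some b →
      ∃ w : H.Walk a b, w.support = l := by
  intro l
  induction l with
  | nil => intro a b _ h; simp at h
  | cons x xs ih =>
    intro a b hchain hhead hlast
    simp only [head?_cons, Option.some.injEq] at hhead
    subst hhead
    cases xs with
    | nil =>
      simp only [getLast?_singleton, Option.some.injEq] at hlast
      subst hlast
      exact ⟨SimpleGraph.Walk.nil, by simp⟩
    | cons y ys =>
      obtain ⟨hadj, hchain'⟩ := List.isChain_cons_cons.mp hchain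
      have hlast' : (y :: ys).getLast? = some b := by
        rwa [List.getLast?_cons_cons] at hlast
      obtain ⟨w, hw⟩ := ih y b hchain' rfl hlast'
      exact ⟨SimpleGraph.Walk.cons hadj w, by simp [hw]⟩

lemma support_head? {a b : V} (w : H.Walk a b) : w.support.head? = some a := by
  cases w <;> simp

lemma support_getLast? {a b : V} (w : H.Walk a b) : w.support.getLast? = some b := by
  induction w with
  | nil => simp
  | cons h p ih =>
    rw [SimpleGraph.Walk.support_cons]
    cases hsup : p.support with
    | nil => exact absurd hsup (SimpleGraph.Walk.support_ne_nil _)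
    | cons c cs => rw [List.getLast?_cons_cons]; rw [hsup] at ih; exact ih


lemma fin_sub_one_iff {N : ℕ} (u v : Fin (N + 2)) :
    v - u = 1 ↔ (v.val = u.val + 1 ∨ (u.val = N + 1 ∧ v.val = 0)) := by
  constructor
  · intro h
    have hv : v = u + 1 := by
      have := congrArg (· + u) h
      simpa [sub_add_cancel, add_comm] using this
    subst hv
    rcases eq_or_ne u (Fin.last (N+1)) with h1 | h1
    · right
      subst h1
      exact ⟨rfl, by simp [Fin.last_add_one]⟩
    · left
      rw [Fin.val_add_one]
      simp [h1]
  · rintro (h | ⟨hu, hv⟩)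
    · have : v = u + 1 := by
        apply Fin.ext
        rw [Fin.val_add_one]
        have hne : u ≠ Fin.last (N+1) := by
          intro hu; subst hu; simp [Fin.last] at h; omega
        simp [hne, h]
      subst this; exact add_sub_cancel_left u 1
    · have hu' : u = Fin.last (N+1) := Fin.ext (by simpa using hu)
      have hv' : v = 0 := Fin.ext (by simpa using hv)
      subst hu'; subst hv'
      apply Fin.ext
      rw [Fin.sub_def]
      simp [Fin.last]

lemma cycle_adj_nat_iff {N : ℕ} (u v : Fin (N + 2)) (huv : u.val < v.val) :
    (cycleGraph (N + 2)).Adj u v ↔ (v.val = u.val + 1 ∨ (u.val = 0 ∧ v.val = N + 1)) := by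
  rw [cycleGraph_adj, fin_sub_one_iff, fin_sub_one_iff]
  have hu := u.isLt
  have hv := v.isLt
  omega

/-- From a chordless cyclic list of length at least 4 we get a contradiction with
chordality. -/
lemma no_induced_cycle_list (hH : IsChordalGraph H) (m : List V) (hlen : 4 ≤ m.length)
    (hnd : m.Nodup)
    (hadj : ∀ i : ℕ, (h : i + 1 < m.length) →
      H.Adj (m.get ⟨i, Nat.lt_of_succ_lt h⟩) (m.get ⟨i+1, h⟩))
    (hwrap : H.Adj (m.get ⟨0, by omega⟩) (m.get ⟨m.length - 1, by omega⟩))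
    (hnonadj : ∀ i j : ℕ, (hi : i < m.length) → (hj : j < m.length) → i + 2 ≤ j →
      ¬(i = 0 ∧ j = m.length - 1) → ¬H.Adj (m.get ⟨i, hi⟩) (m.get ⟨j, hj⟩)) : False := by
  obtain ⟨N, hN⟩ : ∃ N, m.length = N + 2 := ⟨m.length - 2, by omega⟩
  have hcast : ∀ i : Fin (N + 2), i.val < m.length := fun i => by omega
  set f : Fin (N + 2) → V := fun i => m.get ⟨i.val, hcast i⟩ with hf
  have hinj : Function.Injective f := by
    intro i j hij
    have h1 : (⟨i.val, hcast i⟩ : Fin m.length) = ⟨j.val, hcast j⟩ :=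
      List.nodup_iff_injective_get.mp hnd hij
    have h2 : i.val = j.val := congrArg (fun x : Fin m.length => x.val) h1
    exact Fin.ext h2
  have main : ∀ u v : Fin (N + 2), u.val < v.val →
      (H.Adj (f u) (f v) ↔ (cycleGraph (N + 2)).Adj u v) := by
    intro u v huv
    rw [cycle_adj_nat_iff u v huv]
    constructor
    · intro hA
      by_contra hcyc
      push_neg at hcyc
      obtain ⟨h1, h2⟩ := hcyc
      have hj2 : u.val + 2 ≤ v.val := by omega
      have hne : ¬(u.val = 0 ∧ v.val = m.length - 1) := by omega
      exact hnonadj u.val v.val (hcast u) (hcast v) hj2 hne hA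
    · rintro (h | ⟨h0, hN1⟩)
      · have hlt : u.val + 1 < m.length := by omega
        have := hadj u.val hlt
        have heq : (⟨v.val, hcast v⟩ : Fin m.length) = ⟨u.val + 1, hlt⟩ := Fin.ext h
        simp only [hf]
        rw [heq]
        exact this
      · have hequ : (⟨u.val, hcast u⟩ : Fin m.length) = ⟨0, by omega⟩ := Fin.ext h0
        have heqv : (⟨v.val, hcast v⟩ : Fin m.length) = ⟨m.length - 1, by omega⟩ := by
          simp only [Fin.mk.injEq]; omega
        simp only [hf]
        rw [hequ, heqv]
        exact hwrap
  have key : ∀ u v : Fin (N + 2), (H.Adj (f u) (f v) ↔ (cycleGraph (N + 2)).Adj u v) := by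
    intro u v
    rcases lt_trichotomy u.val v.val with h | h | h
    · exact main u v h
    · have : u = v := Fin.ext h
      subst this
      simp [H.irrefl]
    · rw [H.adj_comm (f u) (f v), (cycleGraph (N + 2)).adj_comm u v]
      exact main v u h
  have hemb : cycleGraph (N + 2) ↪g H := ⟨⟨f, hinj⟩, fun {u v} => key u v⟩
  exact (hH (N + 2) (by omega)).false hemb


/-- Core chordality lemma: two non-neighbours of a connected set `D`, both adjacent to `D`,
having a common neighbour `b` that has no neighbours in `D`, must be adjacent. -/
lemma core_adj (hH : IsChordalGraph H) (D : Set V)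
    (hDconn : ∀ d₁ ∈ D, ∀ d₂ ∈ D, ReachIn H D d₁ d₂)
    {s t b : V} (hs : s ∉ D) (ht : t ∉ D) (hst : s ≠ t) (hb : b ∉ D)
    (hsD : ∃ d ∈ D, H.Adj s d) (htD : ∃ d ∈ D, H.Adj t d)
    (hbD : ∀ d ∈ D, ¬H.Adj b d) (hbs : H.Adj b s) (hbt : H.Adj b t) :
    H.Adj s t := by
  by_contra hnadj
  classical
  -- the family of induced-candidate lists
  set Good : Set (List V) :=
    {l | l.Chain' H.Adj ∧ l.head? = some s ∧ l.getLast? = some t ∧ l.Nodup ∧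
      ∀ x ∈ l, x = s ∨ x = t ∨ x ∈ D} with hGood
  -- Good is nonempty
  have hne : ∃ l, l ∈ Good := by
    obtain ⟨d₁, hd₁, hsd₁⟩ := hsD
    obtain ⟨d₂, hd₂, htd₂⟩ := htD
    obtain ⟨w₀, hw₀⟩ := hDconn d₁ hd₁ d₂ hd₂
    set W : H.Walk s t := SimpleGraph.Walk.cons hsd₁ (w₀.concat htd₂.symm) with hW
    refine ⟨W.bypass.support, ?_, support_head? _, support_getLast? _,
      (SimpleGraph.Walk.isPath_def _).mp W.bypass_isPath, ?_⟩
    · exact SimpleGraph.Walk.isChain_adj_support _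
    · intro x hx
      have hx' : x ∈ W.support := SimpleGraph.Walk.support_bypass_subset _ hx
      rw [hW, SimpleGraph.Walk.support_cons] at hx'
      rcases List.mem_cons.mp hx' with h1 | h1
      · exact Or.inl h1
      · rw [SimpleGraph.Walk.support_concat, List.mem_append] at h1
        rcases h1 with h2 | h2
        · exact Or.inr (Or.inr (hw₀ x h2))
        · simp only [List.mem_singleton] at h2
          exact Or.inr (Or.inl h2)
  -- choose a minimal element
  have hlens : {n | ∃ l ∈ Good, l.length = n}.Nonempty := by
    obtain ⟨l, hl⟩ := hne; exact ⟨l.length, l, hl, rfl⟩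
  obtain ⟨l, hlGood, hlen_eq⟩ := Nat.sInf_mem hlens
  have hmin : ∀ l' ∈ Good, l.length ≤ l'.length := by
    intro l' hl'
    rw [hlen_eq]
    exact Nat.sInf_le ⟨l', hl', rfl⟩
  obtain ⟨hchain, hhead, hlast, hnd, hmem⟩ := hlGood
  -- l has length at least 3
  have hlnil : l ≠ [] := by intro h; rw [h] at hhead; simp at hhead
  have hlen3 : 3 ≤ l.length := by
    rcases l with _ | ⟨x, _ | ⟨y, _ | ⟨z, ll⟩⟩⟩
    · simp at hhead
    · exfalso
      simp only [head?_cons, Option.some.injEq] at hhead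
      rw [List.getLast?_singleton] at hlast
      simp only [Option.some.injEq] at hlast
      exact hst (hhead ▸ hlast ▸ rfl)
    · exfalso
      simp only [head?_cons, Option.some.injEq] at hhead
      rw [List.getLast?_cons_cons, List.getLast?_singleton] at hlast
      simp only [Option.some.injEq] at hlast
      subst hhead; subst hlast
      exact hnadj (List.isChain_cons_cons.mp hchain).1
    · simp
  -- minimality gives chordlessness
  have hchordless : ∀ i j : ℕ, (hi : i < l.length) → (hj : j < l.length) → i + 2 ≤ j →
      ¬H.Adj (l.get ⟨i, hi⟩) (l.get ⟨j, hj⟩) := by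
    intro i j hi hj hij hA
    set l' : List V := l.take (i+1) ++ l.drop j with hl'
    have htake_last : (l.take (i+1)).getLast? = some (l.get ⟨i, hi⟩) := by
      rw [List.take_succ]
      rw [List.getElem?_eq_getElem hi]
      simp only [Option.toList_some]
      rw [List.getLast?_concat]
      rfl
    have hdrop_head : (l.drop j).head? = some (l.get ⟨j, hj⟩) := by
      rw [List.head?_drop, List.getElem?_eq_getElem hj]
      rfl
    have hdrop_ne : l.drop j ≠ [] := by
      rw [ne_eq, List.drop_eq_nil_iff]; omega
    have htake_ne : l.take (i+1) ≠ [] := by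
      intro h
      have h2 := congrArg List.length h
      rw [List.length_take] at h2
      simp only [List.length_nil] at h2
      omega
    have hl'Good : l' ∈ Good := by
      refine ⟨?_, ?_, ?_, ?_, ?_⟩
      · show List.IsChain _ (_ ++ _)
        rw [List.isChain_append]
        refine ⟨hchain.take _, hchain.drop _, ?_⟩
        intro x hx y hy
        rw [htake_last, Option.mem_def, Option.some.injEq] at hx
        rw [hdrop_head, Option.mem_def, Option.some.injEq] at hy
        subst hx; subst hy
        exact hA
      · rw [List.head?_append_of_ne_nil] <;> try exact htake_ne
        · rw [← hhead]
          cases l with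
          | nil => simp at hlnil
          | cons c cs => simp [List.take_succ_cons]
      · rw [List.getLast?_append_of_ne_nil _ hdrop_ne]
        rw [← hlast]
        conv_rhs => rw [← List.take_append_drop j l]
        rw [List.getLast?_append_of_ne_nil _ hdrop_ne]
      · have hsub : l' <+ l := by
          have h1 : l.drop j <+ l.drop (i+1) := by
            have : l.drop j = List.drop (j - (i+1)) (l.drop (i+1)) := by
              rw [List.drop_drop]
              congr 1
              omega
            rw [this]
            exact List.drop_sublist _ _
          calc l' <+ l.take (i+1) ++ l.drop (i+1) := h1.append_left _
            _ = l := List.take_append_drop _ _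
        exact hnd.sublist hsub
      · intro x hx
        have hsub : l' <+ l := by
          have h1 : l.drop j <+ l.drop (i+1) := by
            have : l.drop j = List.drop (j - (i+1)) (l.drop (i+1)) := by
              rw [List.drop_drop]; congr 1; omega
            rw [this]; exact List.drop_sublist _ _
          calc l' <+ l.take (i+1) ++ l.drop (i+1) := h1.append_left _
            _ = l := List.take_append_drop _ _
        exact hmem x (hsub.subset hx)
    have : l.length ≤ l'.length := hmin l' hl'Good
    rw [hl', List.length_append, List.length_take, List.length_drop] at this
    omega
  -- the first and last entries of l
  have hget0 : l.get ⟨0, by omega⟩ = s := by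
    cases l with
    | nil => simp at hlnil
    | cons c cs => simp only [head?_cons, Option.some.injEq] at hhead; simpa using hhead
  have hgetlast : l.get ⟨l.length - 1, by omega⟩ = t := by
    rw [List.getLast?_eq_getLast hlnil] at hlast
    simp only [Option.some.injEq] at hlast
    subst hlast
    simp [List.getLast_eq_getElem]
  -- build the cycle list
  set m : List V := l ++ [b] with hm
  have hmlen : m.length = l.length + 1 := by simp [hm]
  have hbl : b ∉ l := by
    intro hbl
    rcases hmem b hbl with h | h | h
    · exact H.irrefl (h ▸ hbs)
    · exact H.irrefl (h ▸ hbt)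
    · exact hb h
  have hget_lt : ∀ (i : ℕ) (hi : i < l.length) (hi' : i < m.length),
      m.get ⟨i, hi'⟩ = l.get ⟨i, hi⟩ := by
    intro i hi hi'
    simp only [hm, List.get_eq_getElem]
    exact List.getElem_append_left hi
  have hget_b : ∀ (hi : l.length < m.length), m.get ⟨l.length, hi⟩ = b := by
    intro hi
    simp only [hm, List.get_eq_getElem]
    exact List.getElem_concat_length rfl _
  refine no_induced_cycle_list hH m (by omega) ?_ ?_ ?_ ?_
  · rw [hm]
    simp only [List.nodup_append]
    exact ⟨hnd, List.nodup_singleton _, fun a ha c hc h => by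
      simp only [List.mem_singleton] at hc
      exact hbl (hc ▸ h ▸ ha)⟩
  · intro i h
    rcases Nat.lt_or_ge (i+1) l.length with h1 | h1
    · rw [hget_lt i (by omega) _, hget_lt (i+1) h1 _]
      exact List.isChain_iff_getElem.mp hchain i (by omega)
    · have hi1 : i + 1 = l.length := by omega
      have hil : i = l.length - 1 := by omega
      have : m.get ⟨i+1, h⟩ = b := by
        rw [← hget_b (by omega)]
        congr 1
        exact Fin.ext (by simpa using hi1)
      rw [this, hget_lt i (by omega) _]
      subst hil
      rw [hgetlast]
      exact hbt.symm
  · have h0 : m.get ⟨0, by omega⟩ = s := by rw [hget_lt 0 (by omega) _, hget0]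
    have hb' : m.get ⟨m.length - 1, by omega⟩ = b := by
      have hb2 := hget_b (by omega)
      have hfin : (⟨m.length - 1, by omega⟩ : Fin m.length) = ⟨l.length, by omega⟩ :=
        Fin.ext (by simp [hmlen])
      rw [hfin]; exact hb2
    rw [h0, hb']
    exact hbs.symm
  · intro i j hi hj hij hne hA
    rcases Nat.lt_or_ge j l.length with h1 | h1
    · rw [hget_lt i (by omega) _, hget_lt j h1 _] at hA
      exact hchordless i j (by omega) h1 hij hA
    · have hjl : j = l.length := by omega
      have hmj : m.get ⟨j, hj⟩ = b := by
        rw [← hget_b (by omega)]; congr 1; exact Fin.ext (by simpa using hjl)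
      have hi0 : i ≠ 0 := by
        intro h0
        exact hne ⟨h0, by omega⟩
      have hil : i < l.length - 1 := by omega
      rw [hmj, hget_lt i (by omega) _] at hA
      -- l.get i is an interior vertex, hence in D
      have hmemi := hmem _ (List.get_mem l ⟨i, by omega⟩)
      have hinj := List.nodup_iff_injective_get.mp hnd
      rcases hmemi with h | h | h
      · have : l.get ⟨i, by omega⟩ = l.get ⟨0, by omega⟩ := by rw [hget0, h]
        have := hinj this
        simp only [Fin.mk.injEq] at this
        exact hi0 this
      · have : l.get ⟨i, by omega⟩ = l.get ⟨l.length - 1, by omega⟩ := by rw [hgetlast, h]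
        have := hinj this
        simp only [Fin.mk.injEq] at this
        omega
      · exact hbD _ h hA.symm


/-- `s` is simplicial within `F`: its neighbours in `F` form a clique. -/
def SimplicialIn (H : SimpleGraph V) (F : Finset V) (s : V) : Prop :=
  s ∈ F ∧ ∀ x ∈ F, ∀ y ∈ F, H.Adj s x → H.Adj s y → x ≠ y → H.Adj x y

lemma simplicial_upgrade {F F₁ : Finset V} {σ : V} (h : SimplicialIn H F₁ σ)
    (hσ : σ ∈ F) (hcl : ∀ x ∈ F, H.Adj σ x → x ∈ F₁) : SimplicialIn H F σ := by
  refine ⟨hσ, fun x hx y hy hax hay hxy => ?_⟩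
  exact h.2 x (hcl x hx hax) y (hcl y hy hay) hax hay hxy

/-- first-exit lemma: a walk from inside `D` to outside `D` contains a vertex outside `D`
adjacent to a vertex of `D`. -/
lemma exists_boundary (D : Set V) :
    ∀ {p q : V} (w : H.Walk p q), p ∈ D → q ∉ D →
      ∃ x ∈ w.support, x ∉ D ∧ ∃ d ∈ D, H.Adj x d := by
  intro p q w
  induction w with
  | nil => intro hp hq; exact absurd hp hq
  | @cons u r v hadj w' ih =>
    intro hp hq
    by_cases hr : r ∈ D
    · obtain ⟨x, hx, hx2⟩ := ih hr hq
      exact ⟨x, by simp [hx], hx2⟩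
    · exact ⟨r, by simp, hr, u, hp, hadj.symm⟩

/-- Dirac: a finite nonempty set in a chordal graph is either complete or contains two
nonadjacent vertices that are simplicial within the set. -/
theorem dirac_strong (hH : IsChordalGraph H) (F : Finset V) (hne : F.Nonempty) :
    (∀ a ∈ F, ∀ b ∈ F, a ≠ b → H.Adj a b) ∨
    ∃ s₁ ∈ F, ∃ s₂ ∈ F, s₁ ≠ s₂ ∧ ¬H.Adj s₁ s₂ ∧ SimplicialIn H F s₁ ∧ SimplicialIn H F s₂ := by
  classical
  induction F using Finset.strongInductionOn with
  | _ F ih =>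
  by_cases hcomp : ∀ a ∈ F, ∀ b ∈ F, a ≠ b → H.Adj a b
  · exact Or.inl hcomp
  · push_neg at hcomp
    obtain ⟨a, ha, b, hb, hab, hnadj⟩ := hcomp
    right
    set F' : Set V := {v | v ∈ F ∧ v ≠ b ∧ ¬H.Adj b v} with hF'
    have haF' : a ∈ F' := ⟨ha, hab, fun h => hnadj h.symm⟩
    set D : Set V := {v | ReachIn H F' a v} with hD
    have haD : a ∈ D := ReachIn.refl haF'
    have hDF' : D ⊆ F' := fun v hv => ReachIn.mem_right hv
    have hDcl : ∀ v ∈ D, ∀ w, H.Adj v w → w ∈ F' → w ∈ D :=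
      fun v hv w hadj hw => ReachIn.adj_right hv hadj hw
    have hbD : b ∉ D := fun h => (hDF' h).2.1 rfl
    have hDconn : ∀ d₁ ∈ D, ∀ d₂ ∈ D, ReachIn H D d₁ d₂ := by
      have hDreach : ∀ v ∈ D, ReachIn H D a v := by
        intro v hv
        obtain ⟨w, hw⟩ := hv
        refine ⟨w, fun x hx => ?_⟩
        exact ⟨w.takeUntil x hx, fun y hy =>
          hw y (SimpleGraph.Walk.support_takeUntil_subset _ _ hy)⟩
      intro d₁ h₁ d₂ h₂
      exact (hDreach d₁ h₁).symm.trans (hDreach d₂ h₂)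
    set S : Set V := {w | w ∈ F ∧ w ∉ D ∧ ∃ d ∈ D, H.Adj w d} with hS
    have hSb : ∀ w ∈ S, H.Adj b w := by
      rintro w ⟨hwF, hwD, d, hd, hwd⟩
      by_contra hnbw
      rcases eq_or_ne w b with rfl | hwb
      · exact (hDF' hd).2.2 hwd
      · exact hwD (hDcl d hd w hwd.symm ⟨hwF, hwb, hnbw⟩)
    have hSclique : ∀ s ∈ S, ∀ t ∈ S, s ≠ t → H.Adj s t := by
      rintro s ⟨hsF, hsD, ds, hds, hsd⟩ t ⟨htF, htD, dt, hdt, htd⟩ hst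
      exact core_adj hH D hDconn hsD htD hst hbD ⟨ds, hds, hsd⟩ ⟨dt, hdt, htd⟩
        (fun d hd => (hDF' hd).2.2) (hSb s ⟨hsF, hsD, ds, hds, hsd⟩)
        (hSb t ⟨htF, htD, dt, hdt, htd⟩)
    have hbS : b ∉ S := fun h => H.irrefl (hSb b h)
    -- closure of neighbourhoods of D inside F
    have hDNcl : ∀ v ∈ D, ∀ w ∈ F, H.Adj v w → w ∈ D ∨ w ∈ S := by
      intro v hv w hwF hadj
      by_cases hwD : w ∈ D
      · exact Or.inl hwD
      · exact Or.inr ⟨hwF, hwD, v, hv, hadj.symm⟩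
    have hDsubF : D ⊆ ↑F := fun v hv => (hDF' hv).1
    -- the first side
    set F₁ : Finset V := F.filter (fun v => v ∈ D ∨ v ∈ S) with hF₁
    have hbF₁ : b ∉ F₁ := by
      simp only [hF₁, Finset.mem_filter]
      rintro ⟨-, h | h⟩
      · exact hbD h
      · exact hbS h
    have hF₁ss : F₁ ⊂ F :=
      ⟨Finset.filter_subset _ _, fun h => hbF₁ (h hb)⟩
    have hF₁ne : F₁.Nonempty := ⟨a, by simp [hF₁, ha, haD]⟩
    have hside1 : ∃ sa ∈ D, SimplicialIn H F sa := by
      rcases ih F₁ hF₁ss hF₁ne with hc | ⟨s₁, hs₁, s₂, hs₂, hne12, hnadj12, hsimp₁, hsimp₂⟩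
      · refine ⟨a, haD, ha, fun x hx y hy hax hay hxy => ?_⟩
        have hx1 : x ∈ F₁ := by
          simp only [hF₁, Finset.mem_filter]
          exact ⟨hx, hDNcl a haD x hx hax⟩
        have hy1 : y ∈ F₁ := by
          simp only [hF₁, Finset.mem_filter]
          exact ⟨hy, hDNcl a haD y hy hay⟩
        exact hc x hx1 y hy1 hxy
      · -- one of s₁, s₂ is in D
        have hmem1 : s₁ ∈ D ∨ s₁ ∈ S := (Finset.mem_filter.mp hs₁).2
        have hmem2 : s₂ ∈ D ∨ s₂ ∈ S := (Finset.mem_filter.mp hs₂).2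
        have hkey : ∃ σ ∈ D, SimplicialIn H F₁ σ := by
          rcases hmem1 with h1 | h1
          · exact ⟨s₁, h1, hsimp₁⟩
          · rcases hmem2 with h2 | h2
            · exact ⟨s₂, h2, hsimp₂⟩
            · exact absurd (hSclique s₁ h1 s₂ h2 hne12) hnadj12
        obtain ⟨σ, hσD, hσsimp⟩ := hkey
        refine ⟨σ, hσD, simplicial_upgrade hσsimp (hDsubF hσD) ?_⟩
        intro x hx hσx
        simp only [hF₁, Finset.mem_filter]
        exact ⟨hx, hDNcl σ hσD x hx hσx⟩
    -- the second side
    set Fm : Set V := {v | v ∈ F ∧ v ∉ S} with hFm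
    set C : Set V := {v | ReachIn H Fm b v} with hC
    have hbC : b ∈ C := ReachIn.refl ⟨hb, hbS⟩
    have hCsub : C ⊆ Fm := fun v hv => ReachIn.mem_right hv
    have hDC : ∀ v, v ∈ D → v ∈ C → False := by
      intro v hvD hvC
      obtain ⟨w, hw⟩ := hvC.symm
      obtain ⟨x, hx, hxD, d, hd, hxd⟩ := exists_boundary D w hvD hbD
      exact (hw x hx).2 ⟨(hw x hx).1, hxD, d, hd, hxd⟩
    have haC : a ∉ C := fun h => hDC a haD h
    have hCNcl : ∀ v ∈ C, ∀ w ∈ F, H.Adj v w → w ∈ C ∨ w ∈ S := by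
      intro v hv w hwF hadj
      by_cases hwS : w ∈ S
      · exact Or.inr hwS
      · exact Or.inl (ReachIn.adj_right hv hadj ⟨hwF, hwS⟩)
    set F₂ : Finset V := F.filter (fun v => v ∈ C ∨ v ∈ S) with hF₂
    have haF₂ : a ∉ F₂ := by
      simp only [hF₂, Finset.mem_filter]
      rintro ⟨-, h | h⟩
      · exact haC h
      · exact h.2.1 haD
    have hF₂ss : F₂ ⊂ F := ⟨Finset.filter_subset _ _, fun h => haF₂ (h ha)⟩
    have hF₂ne : F₂.Nonempty := ⟨b, by simp [hF₂, hb, hbC]⟩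
    have hside2 : ∃ sb ∈ C, SimplicialIn H F sb := by
      rcases ih F₂ hF₂ss hF₂ne with hc | ⟨s₁, hs₁, s₂, hs₂, hne12, hnadj12, hsimp₁, hsimp₂⟩
      · refine ⟨b, hbC, hb, fun x hx y hy hax hay hxy => ?_⟩
        have hx1 : x ∈ F₂ := by
          simp only [hF₂, Finset.mem_filter]
          exact ⟨hx, hCNcl b hbC x hx hax⟩
        have hy1 : y ∈ F₂ := by
          simp only [hF₂, Finset.mem_filter]
          exact ⟨hy, hCNcl b hbC y hy hay⟩
        exact hc x hx1 y hy1 hxy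
      · have hmem1 : s₁ ∈ C ∨ s₁ ∈ S := (Finset.mem_filter.mp hs₁).2
        have hmem2 : s₂ ∈ C ∨ s₂ ∈ S := (Finset.mem_filter.mp hs₂).2
        have hkey : ∃ σ ∈ C, SimplicialIn H F₂ σ := by
          rcases hmem1 with h1 | h1
          · exact ⟨s₁, h1, hsimp₁⟩
          · rcases hmem2 with h2 | h2
            · exact ⟨s₂, h2, hsimp₂⟩
            · exact absurd (hSclique s₁ h1 s₂ h2 hne12) hnadj12
        obtain ⟨σ, hσC, hσsimp⟩ := hkey
        refine ⟨σ, hσC, simplicial_upgrade hσsimp (hCsub hσC).1 ?_⟩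
        intro x hx hσx
        simp only [hF₂, Finset.mem_filter]
        exact ⟨hx, hCNcl σ hσC x hx hσx⟩
    obtain ⟨sa, hsaD, hsa⟩ := hside1
    obtain ⟨sb, hsbC, hsb⟩ := hside2
    refine ⟨sa, hDsubF hsaD, sb, (hCsub hsbC).1, ?_, ?_, hsa, hsb⟩
    · rintro rfl
      exact hDC sa hsaD hsbC
    · intro hadj
      rcases hDNcl sa hsaD sb (hCsub hsbC).1 hadj with h | h
      · exact hDC sb h hsbC
      · exact (hCsub hsbC).2 h


/-- Removing a simplicial vertex `s` from a walk. -/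
lemma surgery {F : Set V} {s : V}
    (hK : ∀ p q : V, p ∈ F → q ∈ F → H.Adj s p → H.Adj s q → p ≠ q → H.Adj p q) :
    ∀ (n : ℕ) {a c : V} (w : H.Walk a c), w.length ≤ n → (∀ x ∈ w.support, x ∈ F) →
      (a ≠ s ∨ c ≠ s) →
      ∃ (a' c' : V) (w' : H.Walk a' c'),
        (∀ x ∈ w'.support, x ∈ F ∧ x ≠ s) ∧ (∀ x ∈ w'.support, x ∈ w.support) ∧
        ((a' = a ∧ a ≠ s) ∨ (a = s ∧ H.Adj s a')) ∧
        ((c' = c ∧ c ≠ s) ∨ (c = s ∧ H.Adj s c')) := by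
  intro n
  induction n with
  | zero =>
    intro a c w hlen hsup hac
    cases w with
    | nil =>
      have has : _ ≠ s := hac.elim id id
      refine ⟨_, _, SimpleGraph.Walk.nil, ?_, fun x hx => hx, Or.inl ⟨rfl, has⟩,
        Or.inl ⟨rfl, has⟩⟩
      intro x hx
      simp only [SimpleGraph.Walk.support_nil, List.mem_singleton] at hx
      subst hx
      exact ⟨hsup _ (by simp), has⟩
    | cons h w₂ => simp at hlen
  | succ n ihn =>
    intro a c w hlen hsup hac
    cases w with
    | nil =>
      have has : _ ≠ s := hac.elim id id
      refine ⟨_, _, SimpleGraph.Walk.nil, ?_, fun x hx => hx, Or.inl ⟨rfl, has⟩,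
        Or.inl ⟨rfl, has⟩⟩
      intro x hx
      simp only [SimpleGraph.Walk.support_nil, List.mem_singleton] at hx
      subst hx
      exact ⟨hsup _ (by simp), has⟩
    | @cons _ bb _ h w₂ =>
      have hsup₂ : ∀ x ∈ w₂.support, x ∈ F := fun x hx => hsup x (by simp [hx])
      by_cases has : a = s
      · -- a = s : drop the first vertex
        have hbb : bb ≠ s := by
          intro hbbs
          exact H.irrefl (hbbs ▸ has ▸ h)
        obtain ⟨a', c', w', hw1, hw2, hw3, hw4⟩ :=
          ihn w₂ (by simp at hlen; omega) hsup₂ (Or.inl hbb)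
        have ha' : a' = bb := by
          rcases hw3 with ⟨h1, -⟩ | ⟨h1, -⟩
          · exact h1
          · exact absurd h1 hbb
        refine ⟨a', c', w', hw1, fun x hx => by simp [hw2 x hx], ?_, hw4⟩
        right
        refine ⟨has, ?_⟩
        rw [ha', ← has]
        exact h
      · -- a ≠ s
        by_cases hbb : bb = s
        · cases w₂ with
          | nil =>
            -- walk is [a, s] and ends at s
            refine ⟨a, a, SimpleGraph.Walk.nil, ?_, ?_, Or.inl ⟨rfl, has⟩,
              Or.inr ⟨hbb, by rw [← hbb]; exact h.symm⟩⟩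
            · intro x hx
              simp only [SimpleGraph.Walk.support_nil, List.mem_singleton] at hx
              subst hx
              exact ⟨hsup _ (by simp), has⟩
            · intro x hx
              simp only [SimpleGraph.Walk.support_nil, List.mem_singleton] at hx
              subst hx; simp
          | @cons _ d _ h₂ w₃ =>
            have h₂' : H.Adj s d := hbb ▸ h₂
            have hsa : H.Adj s a := hbb ▸ h.symm
            have hd : d ≠ s := h₂'.ne'
            have hsup₃ : ∀ x ∈ w₃.support, x ∈ F := fun x hx => hsup₂ x (by simp [hx])
            by_cases had : a = d
            · obtain ⟨a', c', w', hw1, hw2, hw3, hw4⟩ :=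
                ihn w₃ (by simp at hlen; omega) hsup₃ (Or.inl hd)
              have ha' : a' = d := by
                rcases hw3 with ⟨h1, -⟩ | ⟨h1, -⟩
                · exact h1
                · exact absurd h1 hd
              refine ⟨a', c', w', hw1, fun x hx => by simp [hw2 x hx], ?_, hw4⟩
              exact Or.inl ⟨ha'.trans had.symm, has⟩
            · have hadj2 : H.Adj a d :=
                hK a d (hsup a (by simp)) (hsup₃ d (by simp)) hsa h₂' had
              obtain ⟨a', c', w', hw1, hw2, hw3, hw4⟩ :=
                ihn (SimpleGraph.Walk.cons hadj2 w₃) (by simp at hlen ⊢; omega)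
                  (by
                    intro x hx
                    simp only [SimpleGraph.Walk.support_cons, List.mem_cons] at hx
                    rcases hx with rfl | hx
                    · exact hsup x (by simp)
                    · exact hsup₃ x hx)
                  (Or.inl has)
              refine ⟨a', c', w', hw1, ?_, hw3, hw4⟩
              intro x hx
              have := hw2 x hx
              simp only [SimpleGraph.Walk.support_cons, List.mem_cons] at this ⊢
              rcases this with rfl | hx'
              · exact Or.inl rfl
              · exact Or.inr (Or.inr (by simp [hx']))
        · obtain ⟨b', c', w', hw1, hw2, hw3, hw4⟩ :=
            ihn w₂ (by simp at hlen; omega) hsup₂ (Or.inl hbb)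
          have hb' : b' = bb := by
            rcases hw3 with ⟨h1, -⟩ | ⟨h1, -⟩
            · exact h1
            · exact absurd h1 hbb
          subst hb'
          refine ⟨a, c', SimpleGraph.Walk.cons h w', ?_, ?_, Or.inl ⟨rfl, has⟩, hw4⟩
          · intro x hx
            simp only [SimpleGraph.Walk.support_cons, List.mem_cons] at hx
            rcases hx with rfl | hx
            · exact ⟨hsup x (by simp), has⟩
            · exact hw1 x hx
          · intro x hx
            simp only [SimpleGraph.Walk.support_cons, List.mem_cons] at hx ⊢
            rcases hx with rfl | hx
            · exact Or.inl rfl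
            · exact Or.inr (hw2 x hx)


/-- `Q` meets every walk from `A` to `C` whose support stays inside `F`. -/
def HitsIn (H : SimpleGraph V) (Q : Finset V) (F : Finset V) (A C : Finset V) : Prop :=
  ∀ ⦃a c : V⦄ (w : H.Walk a c), a ∈ A → c ∈ C → (∀ x ∈ w.support, x ∈ (F : Set V)) →
    ∃ q ∈ w.support, q ∈ Q

def IsCliqueF (H : SimpleGraph V) (Q : Finset V) : Prop :=
  ∀ x ∈ Q, ∀ y ∈ Q, x ≠ y → H.Adj x y

lemma hits_of_start {Q F A C : Finset V} (h : A ⊆ Q) : HitsIn H Q F A C :=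
  fun a c w ha _ _ => ⟨a, w.start_mem_support, h ha⟩

lemma hits_of_end {Q F A C : Finset V} (h : C ⊆ Q) : HitsIn H Q F A C :=
  fun a c w _ hc _ => ⟨c, w.end_mem_support, h hc⟩

theorem exists_splitting_clique (hH : IsChordalGraph H) (F : Finset V) :
    ∀ (A B C D : Finset V), A.Nonempty → B.Nonempty → C.Nonempty → D.Nonempty →
    A ⊆ F → B ⊆ F → C ⊆ F → D ⊆ F →
    IsCliqueF H A → IsCliqueF H B → IsCliqueF H C → IsCliqueF H D →
    (∀ a ∈ F, ∀ b ∈ F, ReachIn H (F : Set V) a b) →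
    ∃ Q : Finset V, IsCliqueF H Q ∧
      ((HitsIn H Q F A C ∧ HitsIn H Q F B D) ∨ (HitsIn H Q F A D ∧ HitsIn H Q F B C)) := by
  classical
  induction F using Finset.strongInductionOn with
  | _ F ih =>
  intro A B C D hAne hBne hCne hDne hAF hBF hCF hDF hAcl hBcl hCcl hDcl hconn
  have hFne : F.Nonempty := ⟨hAne.choose, hAF hAne.choose_spec⟩
  rcases dirac_strong hH F hFne with hcomp | ⟨s, hsF, s₂, hs₂F, hss₂, hnadj, hsimp, -⟩
  · -- F is complete
    refine ⟨F, hcomp, Or.inl ⟨?_, ?_⟩⟩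
    · exact fun a c w ha _ _ => ⟨a, w.start_mem_support, hAF ha⟩
    · exact fun a c w ha _ _ => ⟨a, w.start_mem_support, hBF ha⟩
  · -- we have a simplicial vertex s
    set K : Finset V := F.filter (fun v => H.Adj s v) with hKdef
    have hKcl : IsCliqueF H K := by
      intro x hx y hy hxy
      rw [hKdef, Finset.mem_filter] at hx hy
      exact hsimp.2 x hx.1 y hy.1 hx.2 hy.2 hxy
    have hKF : K ⊆ F := Finset.filter_subset _ _
    have hsK : s ∉ K := by
      rw [hKdef, Finset.mem_filter]
      rintro ⟨-, h⟩
      exact H.irrefl h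
    have hKne : K.Nonempty := by
      obtain ⟨w, hw⟩ := hconn s hsF s₂ hs₂F
      cases w with
      | nil => exact absurd rfl hss₂
      | @cons _ bbb _ h w₂ =>
        exact ⟨bbb, by
          rw [hKdef, Finset.mem_filter]
          exact ⟨hw bbb (by simp), h⟩⟩
    have hcornerQ : ∀ X : Finset V, X ⊆ F → IsCliqueF H X → s ∈ X → X ⊆ insert s K := by
      intro X hXF hXcl hsX x hx
      rcases eq_or_ne x s with rfl | hxs
      · exact Finset.mem_insert_self _ _
      · refine Finset.mem_insert_of_mem ?_
        rw [hKdef, Finset.mem_filter]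
        exact ⟨hXF hx, (hXcl x hx s hsX hxs).symm⟩
    have hQcl : IsCliqueF H (insert s K) := by
      intro x hx y hy hxy
      rcases Finset.mem_insert.mp hx with rfl | hx'
      · rcases Finset.mem_insert.mp hy with rfl | hy'
        · exact absurd rfl hxy
        · exact (Finset.mem_filter.mp hy').2
      · rcases Finset.mem_insert.mp hy with rfl | hy'
        · exact ((Finset.mem_filter.mp hx').2).symm
        · exact hKcl x hx' y hy' hxy
    -- Case 1: s lies in two of the corners
    by_cases hAC : s ∈ A ∧ s ∈ C
    · exact ⟨insert s K, hQcl, Or.inr ⟨hits_of_start (hcornerQ A hAF hAcl hAC.1),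
        hits_of_end (hcornerQ C hCF hCcl hAC.2)⟩⟩
    by_cases hBD : s ∈ B ∧ s ∈ D
    · exact ⟨insert s K, hQcl, Or.inr ⟨hits_of_end (hcornerQ D hDF hDcl hBD.2),
        hits_of_start (hcornerQ B hBF hBcl hBD.1)⟩⟩
    by_cases hAD : s ∈ A ∧ s ∈ D
    · exact ⟨insert s K, hQcl, Or.inl ⟨hits_of_start (hcornerQ A hAF hAcl hAD.1),
        hits_of_end (hcornerQ D hDF hDcl hAD.2)⟩⟩
    by_cases hBC : s ∈ B ∧ s ∈ C
    · exact ⟨insert s K, hQcl, Or.inl ⟨hits_of_end (hcornerQ C hCF hCcl hBC.2),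
        hits_of_start (hcornerQ B hBF hBcl hBC.1)⟩⟩
    by_cases hAB : s ∈ A ∧ s ∈ B
    · exact ⟨insert s K, hQcl, Or.inl ⟨hits_of_start (hcornerQ A hAF hAcl hAB.1),
        hits_of_start (hcornerQ B hBF hBcl hAB.2)⟩⟩
    by_cases hCD : s ∈ C ∧ s ∈ D
    · exact ⟨insert s K, hQcl, Or.inl ⟨hits_of_end (hcornerQ C hCF hCcl hCD.1),
        hits_of_end (hcornerQ D hDF hDcl hCD.2)⟩⟩
    -- Case 2: s lies in at most one corner; remove s and recurse
    set F' : Finset V := F.erase s with hF'def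
    have hF'ss : F' ⊂ F := Finset.erase_ssubset hsF
    have hKadapt : ∀ p q : V, p ∈ (F : Set V) → q ∈ (F : Set V) → H.Adj s p → H.Adj s q →
        p ≠ q → H.Adj p q := by
      intro p q hp hq h1 h2 h3
      exact hsimp.2 p hp q hq h1 h2 h3
    have hKsubF' : K ⊆ F' := by
      intro x hx
      rw [hF'def, Finset.mem_erase]
      exact ⟨fun h => hsK (h ▸ hx), hKF hx⟩
    have hcornersub : ∀ X : Finset V, X ⊆ F → ¬ s ∈ X → X ⊆ F' := by
      intro X hXF hsX x hx
      rw [hF'def, Finset.mem_erase]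
      exact ⟨fun h => hsX (h ▸ hx), hXF hx⟩
    have hconn' : ∀ a ∈ F', ∀ b ∈ F', ReachIn H (F' : Set V) a b := by
      intro a ha b hb
      rw [hF'def, Finset.mem_erase] at ha hb
      obtain ⟨w, hw⟩ := hconn a ha.2 b hb.2
      obtain ⟨a', c', w', hw1, hw2, hw3, hw4⟩ :=
        surgery hKadapt w.length w le_rfl hw (Or.inl ha.1)
      have ha' : a' = a := by
        rcases hw3 with ⟨h1, -⟩ | ⟨h1, -⟩
        · exact h1
        · exact absurd h1 ha.1
      have hc' : c' = b := by
        rcases hw4 with ⟨h1, -⟩ | ⟨h1, -⟩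
        · exact h1
        · exact absurd h1 hb.1
      subst ha'; subst hc'
      refine ⟨w', fun x hx => ?_⟩
      have := hw1 x hx
      simp only [hF'def, Finset.coe_erase, Set.mem_diff, Set.mem_singleton_iff]
      exact ⟨this.1, this.2⟩
    -- the new corners
    have hrepl : ∀ X : Finset V, X ⊆ F → IsCliqueF H X → X.Nonempty →
        (if s ∈ X then K else X).Nonempty ∧ (if s ∈ X then K else X) ⊆ F' ∧
        IsCliqueF H (if s ∈ X then K else X) := by
      intro X hXF hXcl hXne
      by_cases hsX : s ∈ X
      · simp only [if_pos hsX]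
        exact ⟨hKne, hKsubF', hKcl⟩
      · simp only [if_neg hsX]
        exact ⟨hXne, hcornersub X hXF hsX, hXcl⟩
    obtain ⟨hA'1, hA'2, hA'3⟩ := hrepl A hAF hAcl hAne
    obtain ⟨hB'1, hB'2, hB'3⟩ := hrepl B hBF hBcl hBne
    obtain ⟨hC'1, hC'2, hC'3⟩ := hrepl C hCF hCcl hCne
    obtain ⟨hD'1, hD'2, hD'3⟩ := hrepl D hDF hDcl hDne
    obtain ⟨Q, hQcl', hQpair⟩ := ih F' hF'ss _ _ _ _ hA'1 hB'1 hC'1 hD'1 hA'2 hB'2 hC'2 hD'2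
      hA'3 hB'3 hC'3 hD'3 hconn'
    -- lifting
    have hlift : ∀ X Y : Finset V, X ⊆ F → Y ⊆ F → IsCliqueF H X → IsCliqueF H Y →
        ¬(s ∈ X ∧ s ∈ Y) →
        HitsIn H Q F' (if s ∈ X then K else X) (if s ∈ Y then K else Y) →
        HitsIn H Q F X Y := by
      intro X Y hXF hYF hXcl hYcl hnXY hhits a c w ha hc hsup
      have hns : a ≠ s ∨ c ≠ s := by
        by_contra hcon
        push_neg at hcon
        exact hnXY ⟨hcon.1 ▸ ha, hcon.2 ▸ hc⟩
      obtain ⟨a', c', w', hw1, hw2, hw3, hw4⟩ := surgery hKadapt w.length w le_rfl hsup hns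
      have hstart : a' ∈ (if s ∈ X then K else X) := by
        rcases hw3 with ⟨h1, has⟩ | ⟨has, hadj⟩
        · subst h1
          by_cases hsX : s ∈ X
          · simp only [if_pos hsX]
            rw [hKdef, Finset.mem_filter]
            exact ⟨hXF ha, (hXcl a' ha s hsX has).symm⟩
          · simpa only [if_neg hsX] using ha
        · have hsX : s ∈ X := has ▸ ha
          simp only [if_pos hsX]
          rw [hKdef, Finset.mem_filter]
          exact ⟨(hw1 a' w'.start_mem_support).1, hadj⟩
      have hend : c' ∈ (if s ∈ Y then K else Y) := by
        rcases hw4 with ⟨h1, hcs⟩ | ⟨hcs, hadj⟩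
        · subst h1
          by_cases hsY : s ∈ Y
          · simp only [if_pos hsY]
            rw [hKdef, Finset.mem_filter]
            exact ⟨hYF hc, (hYcl c' hc s hsY hcs).symm⟩
          · simpa only [if_neg hsY] using hc
        · have hsY : s ∈ Y := hcs ▸ hc
          simp only [if_pos hsY]
          rw [hKdef, Finset.mem_filter]
          exact ⟨(hw1 c' w'.end_mem_support).1, hadj⟩
      have hsup' : ∀ x ∈ w'.support, x ∈ (F' : Set V) := by
        intro x hx
        have := hw1 x hx
        simp only [hF'def, Finset.coe_erase, Set.mem_diff, Set.mem_singleton_iff]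
        exact ⟨this.1, this.2⟩
      obtain ⟨q, hq, hqQ⟩ := hhits w' hstart hend hsup'
      exact ⟨q, hw2 q hq, hqQ⟩
    rcases hQpair with ⟨h1, h2⟩ | ⟨h1, h2⟩
    · exact ⟨Q, hQcl', Or.inl ⟨hlift A C hAF hCF hAcl hCcl hAC h1,
        hlift B D hBF hDF hBcl hDcl hBD h2⟩⟩
    · exact ⟨Q, hQcl', Or.inr ⟨hlift A D hAF hDF hAcl hDcl hAD h1,
        hlift B C hBF hCF hBcl hCcl hBC h2⟩⟩

lemma mapLe_support {G G' : SimpleGraph V} (h : G ≤ G') {a b : V} (w : G.Walk a b) :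
    (w.mapLe h).support = w.support := by
  induction w with
  | nil => rfl
  | cons hadj w ih =>
    simp only [SimpleGraph.Walk.mapLe, SimpleGraph.Walk.map_cons,
      SimpleGraph.Walk.support_cons] at ih ⊢
    rw [ih]


end HypAux

open HypAux in
/-- A connected graph of tree-length at most `k` (`k ≥ 1`) is `k`-hyperbolic. -/
theorem hyperbolic_of_treeLength {V : Type*} (G : SimpleGraph V) (hG : G.Connected)
    (k : ℕ) (hk : 0 < k) (H : SimpleGraph V) (hH : IsChordalGraph H) (hle : G ≤ H)
    (hdist : ∀ u v : V, H.Adj u v → G.dist u v ≤ k) :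
    ∀ x y u v : V,
      G.dist x y + G.dist u v ≤
        max (G.dist x u + G.dist y v) (G.dist x v + G.dist y u) + 2 * k := by
  classical
  intro x y u v
  obtain ⟨wxu, hwxu⟩ := hG.exists_walk_length_eq_dist x u
  obtain ⟨wyv, hwyv⟩ := hG.exists_walk_length_eq_dist y v
  obtain ⟨wxv, hwxv⟩ := hG.exists_walk_length_eq_dist x v
  obtain ⟨wyu, hwyu⟩ := hG.exists_walk_length_eq_dist y u
  set F : Finset V :=
    (wxu.support ++ wyv.support ++ wxv.support ++ wyu.support).toFinset with hFdef
  have hmemF : ∀ z : V, z ∈ F ↔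
      (z ∈ wxu.support ∨ z ∈ wyv.support ∨ z ∈ wxv.support ∨ z ∈ wyu.support) := by
    intro z
    simp [hFdef, List.mem_append, or_assoc]
  -- membership of walk supports in F
  have hsupxu : ∀ z ∈ wxu.support, z ∈ (F : Set V) := by
    intro z hz; simp only [Finset.mem_coe, hmemF]; exact Or.inl hz
  have hsupyv : ∀ z ∈ wyv.support, z ∈ (F : Set V) := by
    intro z hz; simp only [Finset.mem_coe, hmemF]; exact Or.inr (Or.inl hz)
  have hsupxv : ∀ z ∈ wxv.support, z ∈ (F : Set V) := by
    intro z hz; simp only [Finset.mem_coe, hmemF]; exact Or.inr (Or.inr (Or.inl hz))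
  have hsupyu : ∀ z ∈ wyu.support, z ∈ (F : Set V) := by
    intro z hz; simp only [Finset.mem_coe, hmemF]; exact Or.inr (Or.inr (Or.inr hz))
  -- reaching endpoints within F
  have hreach : ∀ {a b : V} (w : G.Walk a b), (∀ z ∈ w.support, z ∈ (F : Set V)) →
      ∀ p ∈ w.support, ReachIn H (F : Set V) p b := by
    intro a b w hw p hp
    have hp' : p ∈ (w.mapLe hle).support := by rwa [mapLe_support]
    refine ⟨(w.mapLe hle).dropUntil p hp', fun z hz => ?_⟩
    apply hw
    rw [← mapLe_support hle w]
    exact SimpleGraph.Walk.support_dropUntil_subset _ _ hz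
  have hxu : ReachIn H (F : Set V) x u := hreach wxu hsupxu x wxu.start_mem_support
  have hyv : ReachIn H (F : Set V) y v := hreach wyv hsupyv y wyv.start_mem_support
  have hxv : ReachIn H (F : Set V) x v := hreach wxv hsupxv x wxv.start_mem_support
  have hyu : ReachIn H (F : Set V) y u := hreach wyu hsupyu y wyu.start_mem_support
  -- all corners reach x
  have hcorner_x : ∀ p : V, (p = x ∨ p = y ∨ p = u ∨ p = v) → ReachIn H (F : Set V) p x := by
    rintro p (rfl | rfl | rfl | rfl)
    · exact hxv.trans hxv.symm
    · exact hyu.trans hxu.symm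
    · exact hxu.symm
    · exact hxv.symm
  have hconn : ∀ a ∈ F, ∀ b ∈ F, ReachIn H (F : Set V) a b := by
    have hax : ∀ a ∈ F, ReachIn H (F : Set V) a x := by
      intro a ha
      rcases (hmemF a).mp ha with h | h | h | h
      · exact (hreach wxu hsupxu a h).trans (hcorner_x u (by simp))
      · exact (hreach wyv hsupyv a h).trans (hcorner_x v (by simp))
      · exact (hreach wxv hsupxv a h).trans (hcorner_x v (by simp))
      · exact (hreach wyu hsupyu a h).trans (hcorner_x u (by simp))
    intro a ha b hb
    exact (hax a ha).trans (hax b hb).symm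
  -- corner singletons
  have hsingle : ∀ p : V, IsCliqueF H {p} := by
    intro p a ha b hb hab
    simp only [Finset.mem_singleton] at ha hb
    exact absurd (ha.trans hb.symm) hab
  have hxF : x ∈ F := (hmemF x).mpr (Or.inl wxu.start_mem_support)
  have hyF : y ∈ F := (hmemF y).mpr (Or.inr (Or.inl wyv.start_mem_support))
  have huF : u ∈ F := (hmemF u).mpr (Or.inl wxu.end_mem_support)
  have hvF : v ∈ F := (hmemF v).mpr (Or.inr (Or.inl wyv.end_mem_support))
  obtain ⟨Q, hQcl, hpair⟩ := exists_splitting_clique hH F {x} {y} {u} {v}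
    (Finset.singleton_nonempty _) (Finset.singleton_nonempty _)
    (Finset.singleton_nonempty _) (Finset.singleton_nonempty _)
    (Finset.singleton_subset_iff.mpr hxF) (Finset.singleton_subset_iff.mpr hyF)
    (Finset.singleton_subset_iff.mpr huF) (Finset.singleton_subset_iff.mpr hvF)
    (hsingle x) (hsingle y) (hsingle u) (hsingle v) hconn
  -- distances within Q
  have hQk : ∀ p ∈ Q, ∀ q ∈ Q, G.dist p q ≤ k := by
    intro p hp q hq
    rcases eq_or_ne p q with rfl | hpq
    · rw [SimpleGraph.dist_self]; omega
    · exact hdist p q (hQcl p hp q hq hpq)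
  -- the assembly step
  have assemble : ∀ (x1 y1 u1 v1 : V) (w1 : G.Walk x1 u1) (w2 : G.Walk y1 v1),
      w1.length = G.dist x1 u1 → w2.length = G.dist y1 v1 →
      (∀ z ∈ w1.support, z ∈ (F : Set V)) → (∀ z ∈ w2.support, z ∈ (F : Set V)) →
      HitsIn H Q F {x1} {u1} → HitsIn H Q F {y1} {v1} →
      G.dist x1 y1 + G.dist u1 v1 ≤ G.dist x1 u1 + G.dist y1 v1 + 2 * k := by
    intro x1 y1 u1 v1 w1 w2 hw1len hw2len hw1sup hw2sup hits1 hits2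
    obtain ⟨p, hp, hpQ⟩ := hits1 (w1.mapLe hle) (by simp) (by simp)
      (by rw [mapLe_support]; exact hw1sup)
    obtain ⟨q, hq, hqQ⟩ := hits2 (w2.mapLe hle) (by simp) (by simp)
      (by rw [mapLe_support]; exact hw2sup)
    rw [mapLe_support] at hp hq
    -- split the geodesics at p and q
    have hsplit1 : G.dist x1 p + G.dist p u1 ≤ G.dist x1 u1 := by
      have h1 := SimpleGraph.dist_le (w1.takeUntil p hp)
      have h2 := SimpleGraph.dist_le (w1.dropUntil p hp)
      have h3 : (w1.takeUntil p hp).length + (w1.dropUntil p hp).length = w1.length := by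
        have := congrArg SimpleGraph.Walk.length (w1.take_spec hp)
        rwa [SimpleGraph.Walk.length_append] at this
      omega
    have hsplit2 : G.dist y1 q + G.dist q v1 ≤ G.dist y1 v1 := by
      have h1 := SimpleGraph.dist_le (w2.takeUntil q hq)
      have h2 := SimpleGraph.dist_le (w2.dropUntil q hq)
      have h3 : (w2.takeUntil q hq).length + (w2.dropUntil q hq).length = w2.length := by
        have := congrArg SimpleGraph.Walk.length (w2.take_spec hq)
        rwa [SimpleGraph.Walk.length_append] at this
      omega
    have hpq : G.dist p q ≤ k := hQk p hpQ q hqQ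
    have t1 : G.dist x1 y1 ≤ G.dist x1 p + G.dist p q + G.dist q y1 := by
      have := hG.dist_triangle (u := x1) (v := p) (w := y1)
      have h2 := hG.dist_triangle (u := p) (v := q) (w := y1)
      omega
    have t2 : G.dist u1 v1 ≤ G.dist u1 p + G.dist p q + G.dist q v1 := by
      have := hG.dist_triangle (u := u1) (v := p) (w := v1)
      have h2 := hG.dist_triangle (u := p) (v := q) (w := v1)
      omega
    have hc1 : G.dist u1 p = G.dist p u1 := SimpleGraph.dist_comm
    have hc2 : G.dist q y1 = G.dist y1 q := SimpleGraph.dist_comm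
    omega
  rcases hpair with ⟨h1, h2⟩ | ⟨h1, h2⟩
  · have := assemble x y u v wxu wyv hwxu hwyv hsupxu hsupyv h1 h2
    have hle1 : G.dist x u + G.dist y v ≤
        max (G.dist x u + G.dist y v) (G.dist x v + G.dist y u) := le_max_left _ _
    omega
  · have := assemble x y v u wxv wyu hwxv hwyu hsupxv hsupyu h1 h2
    have hc : G.dist u v = G.dist v u := SimpleGraph.dist_comm
    have hle1 : G.dist x v + G.dist y u ≤
        max (G.dist x u + G.dist y v) (G.dist x v + G.dist y u) := le_max_right _ _
    omega
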